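/- Substitution preserves the 'enough burns' predicate: if expression e satisfies enough_burns and value v satisfies enough_burns (for values), then the substitution e[v/x] satisfies enough_burns, and moreover nb_unprotected_apps(e[v/x]) = nb_unprotected_apps(e). -/

import Mathlib

/-- Lambda calculus with a `burn` construct; values are literals, recursive
closures (here lambdas), pairs of values and injections of values. -/
inductive Expr : Type
  | var : String → Expr
  | lit : ℤ → Expr
  | lam : String → Expr → Expr
  | app : Expr → Expr → Expr
  | burn : Expr → Expr
  | pair : Expr → Expr → Expr
  | inl : Expr → Expr
  | inr : Expr → Expr

/-- Unprotected applications: does not recurse into lambda bodies or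
burn-protected bodies. -/
def Expr.nbUnprotectedApps : Expr → ℕ
  | .var _ => 0
  | .lit _ => 0
  | .lam _ _ => 0
  | .burn _ => 0
  | .app e₁ e₂ => 1 + e₁.nbUnprotectedApps + e₂.nbUnprotectedApps
  | .pair e₁ e₂ => e₁.nbUnprotectedApps + e₂.nbUnprotectedApps
  | .inl e => e.nbUnprotectedApps
  | .inr e => e.nbUnprotectedApps

/-- `enough_burns`: every lambda abstraction occurring anywhere has a body
with zero unprotected applications, recursively. -/
def Expr.enoughBurns : Expr → Prop
  | .var _ => True
  | .lit _ => True
  | .lam _ b => b.nbUnprotectedApps = 0 ∧ b.enoughBurns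
  | .app e₁ e₂ => e₁.enoughBurns ∧ e₂.enoughBurns
  | .burn e => e.enoughBurns
  | .pair e₁ e₂ => e₁.enoughBurns ∧ e₂.enoughBurns
  | .inl e => e.enoughBurns
  | .inr e => e.enoughBurns

/-- Values: literals, closures, pairs of values, injections of values. -/
inductive Expr.IsValue : Expr → Prop
  | lit (z : ℤ) : IsValue (.lit z)
  | lam (x : String) (b : Expr) : IsValue (.lam x b)
  | pair {v w : Expr} : IsValue v → IsValue w → IsValue (.pair v w)
  | inl {v : Expr} : IsValue v → IsValue (.inl v)
  | inr {v : Expr} : IsValue v → IsValue (.inr v)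

/-- Substitution of a (closed) value for a variable. -/
def Expr.subst (x : String) (v : Expr) : Expr → Expr
  | .var y => if y = x then v else .var y
  | .lit z => .lit z
  | .lam y b => if y = x then .lam y b else .lam y (Expr.subst x v b)
  | .app e₁ e₂ => .app (Expr.subst x v e₁) (Expr.subst x v e₂)
  | .burn e => .burn (Expr.subst x v e)
  | .pair e₁ e₂ => .pair (Expr.subst x v e₁) (Expr.subst x v e₂)
  | .inl e => .inl (Expr.subst x v e)
  | .inr e => .inr (Expr.subst x v e)


theorem Expr.IsValue.nb_zero {v : Expr} (hv : v.IsValue) :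
    v.nbUnprotectedApps = 0 := by
  induction hv with
  | lit z => rfl
  | lam x b => rfl
  | pair _ _ ih1 ih2 => simp [Expr.nbUnprotectedApps, ih1, ih2]
  | inl _ ih => simpa [Expr.nbUnprotectedApps] using ih
  | inr _ ih => simpa [Expr.nbUnprotectedApps] using ih

/-- Substitution preserves `enough_burns` and the number of unprotected
applications. -/
theorem subst_preserves_enoughBurns (e v : Expr) (x : String)
    (he : e.enoughBurns) (hv : v.IsValue) (hvb : v.enoughBurns) :
    (Expr.subst x v e).enoughBurns ∧
      (Expr.subst x v e).nbUnprotectedApps = e.nbUnprotectedApps := by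
  induction e with
  | var y =>
    simp only [Expr.subst]
    split
    · exact ⟨hvb, hv.nb_zero⟩
    · exact ⟨trivial, rfl⟩
  | lit z => exact ⟨trivial, rfl⟩
  | lam y b ih =>
    simp only [Expr.subst]
    split
    · exact ⟨he, rfl⟩
    · obtain ⟨h1, h2⟩ := he
      obtain ⟨ih1, ih2⟩ := ih h2
      exact ⟨⟨ih2.trans h1, ih1⟩, rfl⟩
  | app e₁ e₂ ih1 ih2 =>
    obtain ⟨a1, a2⟩ := ih1 he.1
    obtain ⟨b1, b2⟩ := ih2 he.2
    exact ⟨⟨a1, b1⟩, by simp [Expr.subst, Expr.nbUnprotectedApps, a2, b2]⟩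
  | burn e ih =>
    obtain ⟨a1, a2⟩ := ih he
    exact ⟨a1, rfl⟩
  | pair e₁ e₂ ih1 ih2 =>
    obtain ⟨a1, a2⟩ := ih1 he.1
    obtain ⟨b1, b2⟩ := ih2 he.2
    exact ⟨⟨a1, b1⟩, by simp [Expr.subst, Expr.nbUnprotectedApps, a2, b2]⟩
  | inl e ih =>
    obtain ⟨a1, a2⟩ := ih he
    exact ⟨a1, a2⟩
  | inr e ih =>
    obtain ⟨a1, a2⟩ := ih he
    exact ⟨a1, a2⟩
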